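/- arXiv:1405.3390 — 2 statements merged into one kernel-verified Lean document; each statement's English description precedes it below -/
import Mathlib

section
/- If x ∈ 𝒬'_g(n+2) (i.e. x is either a connected 2-backbone shape of genus g with n+2 arcs, or an ordered pair of 1-backbone shapes with positive genera summing to g+1 and arc numbers summing to n+2, placed on two backbones) has exactly ℓ multiloops, then its image η(x) under the gluing map is an A-shape over one backbone in 𝒜_{g+1}(n+3) having exactly ℓ+1 multiloops; here a multiloop is a boundary component of length at least 3, i.e. a cycle of α∘γ of length ≥ 3. -/
namespace RNA

noncomputable section

/-- The forward orbit of `x` under iteration of `f`. -/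
def orbitOf (f : ℕ → ℕ) (x : ℕ) : Set ℕ := {y | ∃ j : ℕ, f^[j] x = y}

/-- The number of cycles (orbits) of `f` among the points `< k`. -/
def numCyclesOn (f : ℕ → ℕ) (k : ℕ) : ℕ :=
  Set.ncard {S : Set ℕ | ∃ x, x < k ∧ S = orbitOf f x}

/-- The number of cycles of length at least `3` among the points `< k` (multiloops). -/
def numMultiOn (f : ℕ → ℕ) (k : ℕ) : ℕ :=
  Set.ncard {S : Set ℕ | (∃ x, x < k ∧ S = orbitOf f x) ∧ 3 ≤ S.ncard}

/-- The cyclic permutation `(0 1 ⋯ k-1)`, as a function on `ℕ` fixing everything `≥ k`. -/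
def gammaOne (k : ℕ) : ℕ → ℕ := fun i => if i + 1 = k then 0 else if i < k then i + 1 else i

/-- The permutation with the two cycles `(0 ⋯ m-1)` and `(m ⋯ k-1)`. -/
def gammaTwo (m k : ℕ) : ℕ → ℕ := fun i =>
  if i + 1 = m then 0 else if i + 1 = k then m else if i < k then i + 1 else i

/-- A planted 1-backbone diagram with `n` arcs: an involution on the vertices
`0, 1, …, 2n-1` (shifting the paper's labels `1, …, 2n` by one). -/
structure OneD where
  n : ℕ
  f : ℕ → ℕ

namespace OneD

/-- Well-formedness: `n ≥ 1`, `f` is a fixed-point-free involution of `{0, …, 2n-1}`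
(extended by the identity elsewhere) pairing `0` with `2n-1` (the rainbow). -/
def WF (D : OneD) : Prop :=
  1 ≤ D.n ∧ (∀ i, i < 2 * D.n → D.f i < 2 * D.n) ∧
    (∀ i, 2 * D.n ≤ i → D.f i = i) ∧ (∀ i, D.f (D.f i) = i) ∧
    (∀ i, i < 2 * D.n → D.f i ≠ i) ∧ D.f 0 = 2 * D.n - 1

/-- `{i,j}` is an arc. -/
def arc (D : OneD) (i j : ℕ) : Prop := i < 2 * D.n ∧ D.f i = j

/-- A shape: no 1-arc other than possibly the rainbow, and no stack
(no pair of arcs `{i,j}`, `{i+1,j-1}` with `i+1 < j-1`). -/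
def IsShape (D : OneD) : Prop :=
  (∀ i, D.arc i (i + 1) → i = 0 ∧ i + 1 = 2 * D.n - 1) ∧
  (∀ i j, D.arc i j → D.arc (i + 1) (j - 1) → ¬ (i + 1 < j - 1))

/-- The boundary permutation `α ∘ γ`. -/
def bd (D : OneD) : ℕ → ℕ := D.f ∘ gammaOne (2 * D.n)

/-- The number `r` of boundary components. -/
def r (D : OneD) : ℕ := numCyclesOn D.bd (2 * D.n)

/-- The number of multiloops: boundary components of length at least 3. -/
def nMulti (D : OneD) : ℕ := numMultiOn D.bd (2 * D.n)

/-- The genus `g`, defined by `2 - 2g - r = 1 - n`. -/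
def HasGenus (D : OneD) (g : ℕ) : Prop := 2 * g + D.r = D.n + 1

/-- A-shape: the vertex following the partner of vertex `1` (paper's vertex `2`)
is paired with vertex `2n-2` (paper's vertex `2n-1`); only for `n ≥ 2`. -/
def IsA (D : OneD) : Prop := 2 ≤ D.n ∧ D.f (D.f 1 + 1) = 2 * D.n - 2

/-- B-shape: a shape with `n ≥ 2` arcs which is not an A-shape. -/
def IsB (D : OneD) : Prop := 2 ≤ D.n ∧ D.f (D.f 1 + 1) ≠ 2 * D.n - 2

end OneD

/-- The set of 1-backbone shapes of genus `g`. -/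
def oneShapeSet (g : ℕ) : Set OneD := {D | D.WF ∧ D.IsShape ∧ D.HasGenus g}

/-- The set of 1-backbone shapes of genus `g` with `n` arcs. -/
def oneShapeSetN (g n : ℕ) : Set OneD := {D | D ∈ oneShapeSet g ∧ D.n = n}

/-- The set of A-shapes of genus `g`. -/
def ASet (g : ℕ) : Set OneD := {D | D ∈ oneShapeSet g ∧ D.IsA}

/-- The set `𝒜_g(n)` of A-shapes of genus `g` with `n` arcs. -/
def ASetN (g n : ℕ) : Set OneD := {D | D ∈ oneShapeSetN g n ∧ D.IsA}

/-- The set `ℬ_g(n)` of B-shapes of genus `g` with `n` arcs. -/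
def BSetN (g n : ℕ) : Set OneD := {D | D ∈ oneShapeSetN g n ∧ D.IsB}

/-- `s_g(n)`: the number of 1-backbone shapes of genus `g` with `n` arcs. -/
def sCount (g n : ℕ) : ℕ := (oneShapeSetN g n).ncard

/-- `a_g(n)`: the number of A-shapes of genus `g` with `n` arcs. -/
def aCount (g n : ℕ) : ℕ := (ASetN g n).ncard

/-- A 2-backbone diagram with `n` arcs and cut point `m`: an involution on the
vertices `0, …, 2n-1`, with backbones `{0, …, m-1}` and `{m, …, 2n-1}`. -/
structure TwoD where
  n : ℕ
  m : ℕ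
  f : ℕ → ℕ

namespace TwoD

/-- Well-formedness of a 2-backbone matching: two nonempty backbones and `f` a
fixed-point-free involution of `{0, …, 2n-1}` (extended by the identity). -/
def WF (D : TwoD) : Prop :=
  1 ≤ D.m ∧ D.m < 2 * D.n ∧ (∀ i, i < 2 * D.n → D.f i < 2 * D.n) ∧
    (∀ i, 2 * D.n ≤ i → D.f i = i) ∧ (∀ i, D.f (D.f i) = i) ∧
    (∀ i, i < 2 * D.n → D.f i ≠ i)

/-- `{i,j}` is an arc. -/
def arc (D : TwoD) (i j : ℕ) : Prop := i < 2 * D.n ∧ D.f i = j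

/-- `i` and `j` lie in the same backbone. -/
def sameBB (D : TwoD) (i j : ℕ) : Prop := (i < D.m ∧ j < D.m) ∨ (D.m ≤ i ∧ D.m ≤ j)

/-- Connectivity: some arc has one endpoint in each backbone. -/
def Connected (D : TwoD) : Prop := ∃ i j, D.arc i j ∧ i < D.m ∧ D.m ≤ j

/-- A 2-backbone shape: both rainbows `{0, m-1}` and `{m, 2n-1}` are present,
there is no 1-arc (an arc `{i,i+1}` within one backbone) other than possibly the
rainbows, and no stack. -/
def IsShape (D : TwoD) : Prop :=
  2 ≤ D.m ∧ D.m + 2 ≤ 2 * D.n ∧ D.f 0 = D.m - 1 ∧ D.f D.m = 2 * D.n - 1 ∧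
  (∀ i, D.arc i (i + 1) → D.sameBB i (i + 1) →
      (i = 0 ∧ i + 1 = D.m - 1) ∨ (i = D.m ∧ i + 1 = 2 * D.n - 1)) ∧
  (∀ i j, D.arc i j → D.arc (i + 1) (j - 1) → D.sameBB i (i + 1) →
      D.sameBB (j - 1) j → ¬ (i + 1 < j - 1))

/-- The boundary permutation `α ∘ γ`. -/
def bd (D : TwoD) : ℕ → ℕ := D.f ∘ gammaTwo D.m (2 * D.n)

/-- The number `r` of boundary components. -/
def r (D : TwoD) : ℕ := numCyclesOn D.bd (2 * D.n)

/-- The number of multiloops: boundary components of length at least 3. -/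
def nMulti (D : TwoD) : ℕ := numMultiOn D.bd (2 * D.n)

/-- The genus `g`, defined by `2 - 2g - r = 2 - n`. -/
def HasGenus (D : TwoD) (g : ℕ) : Prop := 2 * g + D.r = D.n

end TwoD

/-- The set `𝒬_g(n)` of connected 2-backbone shapes of genus `g` with `n` arcs. -/
def twoShapeSetN (g n : ℕ) : Set TwoD :=
  {D | D.WF ∧ D.IsShape ∧ D.Connected ∧ D.HasGenus g ∧ D.n = n}

/-- `q_g(n)`: the number of connected 2-backbone shapes of genus `g` with `n` arcs. -/
def qCount (g n : ℕ) : ℕ := (twoShapeSetN g n).ncard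

/-- The gluing map `η`: concatenate the two backbones (the two old rainbows become
ordinary arcs) and add a new rainbow over the resulting single backbone. -/
def glue (D : TwoD) : OneD :=
  ⟨D.n + 1, fun i =>
    if i = 0 then 2 * D.n + 1
    else if i = 2 * D.n + 1 then 0
    else if i ≤ 2 * D.n then D.f (i - 1) + 1
    else i⟩

/-- Place an ordered pair of 1-backbone diagrams on two backbones,
each keeping its own rainbow. -/
def combine (S T : OneD) : TwoD :=
  ⟨S.n + T.n, 2 * S.n, fun i =>
    if i < 2 * S.n then S.f i
    else if i < 2 * (S.n + T.n) then T.f (i - 2 * S.n) + 2 * S.n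
    else i⟩

/-- The set `𝒬'_g(N)`: the disjoint union of the set of connected 2-backbone shapes
of genus `g` with `N` arcs and the set of ordered pairs of 1-backbone shapes whose
genera are positive and sum to `g+1` and whose arc numbers sum to `N`. -/
def QprimeSetN (g N : ℕ) : Set (TwoD ⊕ OneD × OneD) :=
  {x | Sum.elim
        (fun D : TwoD => D.WF ∧ D.IsShape ∧ D.Connected ∧ D.HasGenus g ∧ D.n = N)
        (fun p : OneD × OneD =>
          p.1.WF ∧ p.1.IsShape ∧ p.2.WF ∧ p.2.IsShape ∧
          (∃ g₁ g₂, 1 ≤ g₁ ∧ 1 ≤ g₂ ∧ g₁ + g₂ = g + 1 ∧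
            p.1.HasGenus g₁ ∧ p.2.HasGenus g₂) ∧
          p.1.n + p.2.n = N) x}

/-- The gluing map `η` on `𝒬'`: glue a connected 2-backbone shape directly, and glue
a pair of 1-backbone shapes after placing them on two backbones. -/
def etaMap : TwoD ⊕ OneD × OneD → OneD := Sum.elim glue fun p => glue (combine p.1 p.2)

/-- The 2-backbone diagram underlying an element of `𝒬'`. -/
def underlyingTwoD : TwoD ⊕ OneD × OneD → TwoD := Sum.elim id fun p => combine p.1 p.2

/-- Old label of the new vertex `k` after deleting the two points `a < b`. -/
def insTwo (a b k : ℕ) : ℕ := if k < a then k else if k + 1 < b then k + 1 else k + 2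

/-- New label of the old vertex `j` after deleting the two points `a < b`. -/
def delTwo (a b j : ℕ) : ℕ := j - (if a < j then 1 else 0) - (if b < j then 1 else 0)

/-- The involution obtained from `f` by deleting the two paired points `a < b`
and relabeling. -/
def deleteTwo (f : ℕ → ℕ) (a b : ℕ) : ℕ → ℕ := fun k => delTwo a b (f (insTwo a b k))

/-- The map `θ`: remove from an A-shape the arc joining the vertex following the
partner of vertex `1` (paper's vertex `2`) to the vertex `2n-2` (paper's `2n-1`),
deleting its two endpoints and relabeling. -/
def theta (D : OneD) : OneD := ⟨D.n - 1, deleteTwo D.f (D.f 1 + 1) (2 * D.n - 2)⟩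

/-- The new cut point after deleting the points `a` and `b`. -/
def mshift (m a b : ℕ) : ℕ := m - (if a < m then 1 else 0) - (if b < m then 1 else 0)

/-- One reduction step: delete a 1-arc (an arc `{i,i+1}` within one backbone), or
collapse a stack `{i,j}`, `{i+1,j-1}` by deleting the inner arc `{i+1,j-1}`. -/
def Step (M M' : TwoD) : Prop :=
  (∃ i, M.arc i (i + 1) ∧ M.sameBB i (i + 1) ∧
      M' = ⟨M.n - 1, mshift M.m i (i + 1), deleteTwo M.f i (i + 1)⟩) ∨
  (∃ i j, M.arc i j ∧ M.arc (i + 1) (j - 1) ∧ i + 1 < j - 1 ∧ M.sameBB i (i + 1) ∧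
      M.sameBB (j - 1) j ∧
      M' = ⟨M.n - 1, mshift M.m (i + 1) (j - 1), deleteTwo M.f (i + 1) (j - 1)⟩)

/-- A pure preshape: no 1-arc and no stack remain. -/
def Reduced (P : TwoD) : Prop :=
  (∀ i, ¬ (P.arc i (i + 1) ∧ P.sameBB i (i + 1))) ∧
  (∀ i j, P.arc i j → P.arc (i + 1) (j - 1) → P.sameBB i (i + 1) →
      P.sameBB (j - 1) j → ¬ (i + 1 < j - 1))

/-- Relabeling of an old vertex of a preshape after planting rainbows. -/
def newlab (m o : ℕ) : ℕ := if o < m then o + 1 else o + 3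

/-- Plant a rainbow over each backbone of a pure preshape. -/
def plant (P : TwoD) : TwoD :=
  ⟨P.n + 2, P.m + 2, fun k =>
    if k = 0 then P.m + 1
    else if k = P.m + 1 then 0
    else if k = P.m + 2 then 2 * P.n + 3
    else if k = 2 * P.n + 3 then P.m + 2
    else if k ≤ P.m then newlab P.m (P.f (k - 1))
    else if k ≤ 2 * P.n + 2 then newlab P.m (P.f (k - 3))
    else k⟩

/-- `s` is the shape of the 2-backbone matching `M`: iteratively collapse stacks and
delete 1-arcs until none remains, then add a rainbow over each backbone. -/
def ShapeOf (M s : TwoD) : Prop :=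
  ∃ P : TwoD, Relation.ReflTransGen Step M P ∧ Reduced P ∧ s = plant P

/-- `q_s(n)`: the number of 2-backbone matchings with `n` arcs whose shape is `s`. -/
def fiberCount (s : TwoD) (n : ℕ) : ℕ :=
  Set.ncard {M : TwoD | M.WF ∧ M.n = n ∧ ShapeOf M s}

/-- `w_g(n)`: the number of connected 2-backbone matchings with `n` arcs and genus `g`. -/
def wCount (g n : ℕ) : ℕ :=
  Set.ncard {M : TwoD | M.WF ∧ M.Connected ∧ M.HasGenus g ∧ M.n = n}

/-- `W_g(z) = Σ_n w_g(n) zⁿ`, as a formal power series. -/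
def Wseries (g : ℕ) : PowerSeries ℤ := PowerSeries.mk fun n => (wCount g n : ℤ)

/-- The Catalan generating function `C₀(z) = Σ_n Catalan(n) zⁿ`. -/
def catGF : PowerSeries ℤ := PowerSeries.mk fun n => (catalan n : ℤ)

/-- `q̃_g(l)`: the number of connected 2-backbone shapes of genus `g` having `l` arcs
besides their two rainbows. -/
def qlCount (g l : ℕ) : ℕ := qCount g (l + 2)

end

section EtaHelpers

lemma mem_orbit_self (f : ℕ → ℕ) (x : ℕ) : x ∈ orbitOf f x := ⟨0, rfl⟩

lemma orbit_subset {f : ℕ → ℕ} {A : Set ℕ} (hA : ∀ a ∈ A, f a ∈ A) {x : ℕ} (hx : x ∈ A) :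
    orbitOf f x ⊆ A := by
  rintro y ⟨j, rfl⟩
  induction j with
  | zero => exact hx
  | succ j ih => rw [Function.iterate_succ_apply']; exact hA _ ih

lemma orbit_fixed {f : ℕ → ℕ} {x : ℕ} (h : f x = x) : orbitOf f x = {x} := by
  apply subset_antisymm
  · exact orbit_subset (by rintro a ha; simp only [Set.mem_singleton_iff] at ha ⊢; rw [ha, h]) rfl
  · intro y hy; simp only [Set.mem_singleton_iff] at hy; exact hy ▸ mem_orbit_self f x

lemma orbit_cycle3 {f : ℕ → ℕ} {a b c : ℕ} (h1 : f a = b) (h2 : f b = c) (h3 : f c = a) :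
    orbitOf f a = {a, b, c} := by
  apply subset_antisymm
  · refine orbit_subset ?_ (by simp)
    intro y hy
    simp only [Set.mem_insert_iff, Set.mem_singleton_iff] at hy ⊢
    rcases hy with rfl | rfl | rfl
    · rw [h1]; tauto
    · rw [h2]; tauto
    · rw [h3]; tauto
  · intro y hy
    simp only [Set.mem_insert_iff, Set.mem_singleton_iff] at hy
    rcases hy with rfl | rfl | rfl
    · exact ⟨0, rfl⟩
    · exact ⟨1, by simp [h1]⟩
    · exact ⟨2, by rw [Function.iterate_succ_apply', Function.iterate_one, h1, h2]⟩

lemma orbit_conj {f g e : ℕ → ℕ} {A : Set ℕ} (hA : ∀ a ∈ A, f a ∈ A)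
    (hc : ∀ a ∈ A, g (e a) = e (f a)) {x : ℕ} (hx : x ∈ A) :
    orbitOf g (e x) = e '' orbitOf f x := by
  have key : ∀ j, g^[j] (e x) = e (f^[j] x) ∧ f^[j] x ∈ A := by
    intro j; induction j with
    | zero => exact ⟨rfl, hx⟩
    | succ j ih =>
      constructor
      · rw [Function.iterate_succ_apply', Function.iterate_succ_apply', ih.1, hc _ ih.2]
      · rw [Function.iterate_succ_apply']; exact hA _ ih.2
  ext y
  constructor
  · rintro ⟨j, rfl⟩; exact ⟨f^[j] x, ⟨j, rfl⟩, ((key j).1).symm⟩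
  · rintro ⟨z, ⟨j, rfl⟩, rfl⟩; exact ⟨j, (key j).1⟩

lemma cycSet_eq (f : ℕ → ℕ) (k : ℕ) :
    {S : Set ℕ | ∃ x, x < k ∧ S = orbitOf f x} = orbitOf f '' Set.Iio k := by
  ext S
  constructor
  · rintro ⟨x, hx, rfl⟩; exact ⟨x, hx, rfl⟩
  · rintro ⟨x, hx, rfl⟩; exact ⟨x, hx, rfl⟩

lemma cycSet_finite (f : ℕ → ℕ) (k : ℕ) :
    {S : Set ℕ | ∃ x, x < k ∧ S = orbitOf f x}.Finite := by
  rw [cycSet_eq]; exact (Set.finite_Iio k).image _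

lemma numCyclesOn_pos (f : ℕ → ℕ) {k : ℕ} (hk : 1 ≤ k) : 1 ≤ numCyclesOn f k := by
  rw [numCyclesOn, Nat.one_le_iff_ne_zero, ← Nat.pos_iff_ne_zero]
  rw [Set.ncard_pos (cycSet_finite f k)]
  exact ⟨orbitOf f 0, 0, hk, rfl⟩

end EtaHelpers
section CycCount

lemma succ_inj' : Function.Injective (fun a : ℕ => a + 1) := fun a b h => by simpa using h

lemma glue_cyc {d g : ℕ → ℕ} {m N : ℕ} (hm2 : 2 ≤ m) (hmN : m + 2 ≤ N)
    (hdm : d (m - 1) = m - 1) (hdN : d (N - 1) = N - 1)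
    (hdA : ∀ a, a < N → a ≠ m - 1 → a ≠ N - 1 → d a < N ∧ d a ≠ m - 1 ∧ d a ≠ N - 1)
    (hge : ∀ a, a < N → a ≠ m - 1 → a ≠ N - 1 → g (a + 1) = d a + 1)
    (hg0 : g 0 = m) (hgm : g m = N) (hgN : g N = 0) (hgt : g (N + 1) = N + 1) :
    numCyclesOn g (N + 2) = numCyclesOn d N ∧
      numMultiOn g (N + 2) = numMultiOn d N + 1 := by
  set A : Set ℕ := {a | a < N ∧ a ≠ m - 1 ∧ a ≠ N - 1} with hA
  have hAinv : ∀ a ∈ A, d a ∈ A := by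
    rintro a ⟨h1, h2, h3⟩; exact hdA a h1 h2 h3
  have horb : ∀ a ∈ A, orbitOf g (a + 1) = (fun b => b + 1) '' orbitOf d a := by
    rintro a ha
    exact orbit_conj hAinv (fun b hb => hge b hb.1 hb.2.1 hb.2.2) ha
  set CA : Set (Set ℕ) := orbitOf d '' A with hCA
  have hCAfin : CA.Finite := (Set.Finite.subset (Set.finite_Iio N) (fun a ha => ha.1)).image _
  have hCAsub : ∀ SS ∈ CA, SS ⊆ A := by
    rintro _ ⟨a, ha, rfl⟩; exact orbit_subset hAinv ha
  have hCAne : ∀ SS ∈ CA, SS.Nonempty := by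
    rintro _ ⟨a, _, rfl⟩; exact ⟨a, mem_orbit_self d a⟩
  have horbg0 : orbitOf g 0 = {0, m, N} := orbit_cycle3 hg0 hgm hgN
  have horbgm : orbitOf g m = {0, m, N} := by
    rw [orbit_cycle3 hgm hgN hg0]; ext y; simp; tauto
  have horbgN : orbitOf g N = {0, m, N} := by
    rw [orbit_cycle3 hgN hg0 hgm]; ext y; simp; tauto
  have horbgt : orbitOf g (N + 1) = {N + 1} := orbit_fixed hgt
  have horbdm : orbitOf d (m - 1) = {m - 1} := orbit_fixed hdm
  have horbdN : orbitOf d (N - 1) = {N - 1} := orbit_fixed hdN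
  have hCg : {S : Set ℕ | ∃ x, x < N + 2 ∧ S = orbitOf g x}
      = insert {N + 1} (insert {0, m, N} ((Set.image (fun b => b + 1)) '' CA)) := by
    ext SS
    simp only [Set.mem_setOf_eq, Set.mem_insert_iff]
    constructor
    · rintro ⟨x, hx, rfl⟩
      by_cases hx1 : x = N + 1
      · subst hx1; exact Or.inl horbgt
      by_cases hx0 : x = 0
      · subst hx0; exact Or.inr (Or.inl horbg0)
      by_cases hxm : x = m
      · subst hxm; exact Or.inr (Or.inl horbgm)
      by_cases hxN : x = N
      · subst hxN; exact Or.inr (Or.inl horbgN)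
      · obtain ⟨a, rfl⟩ : ∃ a, x = a + 1 := ⟨x - 1, by omega⟩
        have haA : a ∈ A := ⟨by omega, by omega, by omega⟩
        exact Or.inr (Or.inr ⟨orbitOf d a, ⟨a, haA, rfl⟩, (horb _ haA).symm⟩)
    · rintro (rfl | rfl | ⟨S₀, ⟨a, ha, rfl⟩, rfl⟩)
      · exact ⟨N + 1, by omega, horbgt.symm⟩
      · exact ⟨0, by omega, horbg0.symm⟩
      · exact ⟨a + 1, by have := ha.1; omega, (horb a ha).symm⟩
  have hCd : {S : Set ℕ | ∃ x, x < N ∧ S = orbitOf d x}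
      = insert {m - 1} (insert {N - 1} CA) := by
    ext SS
    simp only [Set.mem_setOf_eq, Set.mem_insert_iff]
    constructor
    · rintro ⟨x, hx, rfl⟩
      by_cases hxm : x = m - 1
      · subst hxm; exact Or.inl horbdm
      by_cases hxN : x = N - 1
      · subst hxN; exact Or.inr (Or.inl horbdN)
      · exact Or.inr (Or.inr ⟨x, ⟨hx, hxm, hxN⟩, rfl⟩)
    · rintro (rfl | rfl | ⟨a, ha, rfl⟩)
      · exact ⟨m - 1, by omega, horbdm.symm⟩
      · exact ⟨N - 1, by omega, horbdN.symm⟩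
      · exact ⟨a, ha.1, rfl⟩
  -- non-membership facts
  have hno3 : ({0, m, N} : Set ℕ) ∉ (Set.image (fun b => b + 1)) '' CA := by
    rintro ⟨S₀, _, hS₀⟩
    have h0 : (0 : ℕ) ∈ (Set.image (fun b => b + 1)) S₀ := by rw [hS₀]; simp
    obtain ⟨b, _, hb⟩ := h0
    simp at hb
  have hnoT : ({N + 1} : Set ℕ) ∉ insert {0, m, N} ((Set.image (fun b => b + 1)) '' CA) := by
    rintro (h | ⟨S₀, hS₀CA, hS₀⟩)
    · have hmem : (N + 1 : ℕ) ∈ ({0, m, N} : Set ℕ) := by rw [← h]; simp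
      simp only [Set.mem_insert_iff, Set.mem_singleton_iff] at hmem
      omega
    · obtain ⟨a, ha, rfl⟩ := hS₀CA
      have hmem : a + 1 ∈ (Set.image (fun b => b + 1)) (orbitOf d a) :=
        ⟨a, mem_orbit_self d a, rfl⟩
      rw [hS₀] at hmem
      simp only [Set.mem_singleton_iff] at hmem
      have := ha.1; omega
  have hnom : ({m - 1} : Set ℕ) ∉ insert {N - 1} CA := by
    rintro (h | hmem)
    · have hmem : m - 1 ∈ ({N - 1} : Set ℕ) := by rw [← h]; simp
      simp only [Set.mem_singleton_iff] at hmem; omega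
    · obtain ⟨a, ha, hS⟩ := hmem
      have hmem : a ∈ ({m - 1} : Set ℕ) := by rw [← hS]; exact mem_orbit_self d a
      simp only [Set.mem_singleton_iff] at hmem; exact ha.2.1 hmem
  have hnoN : ({N - 1} : Set ℕ) ∉ CA := by
    rintro ⟨a, ha, hS⟩
    have hmem : a ∈ ({N - 1} : Set ℕ) := by rw [← hS]; exact mem_orbit_self d a
    simp only [Set.mem_singleton_iff] at hmem; exact ha.2.2 hmem
  have himginj : Function.Injective (Set.image (fun b : ℕ => b + 1)) :=
    Set.image_injective.mpr succ_inj'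
  have hfinImg : ((Set.image (fun b : ℕ => b + 1)) '' CA).Finite := hCAfin.image _
  have hcard1 : numCyclesOn g (N + 2) = CA.ncard + 2 := by
    rw [numCyclesOn, hCg, Set.ncard_insert_of_notMem hnoT (hfinImg.insert _),
      Set.ncard_insert_of_notMem hno3 hfinImg,
      Set.ncard_image_of_injective _ himginj]
  have hcard2 : numCyclesOn d N = CA.ncard + 2 := by
    rw [numCyclesOn, hCd, Set.ncard_insert_of_notMem hnom (hCAfin.insert _),
      Set.ncard_insert_of_notMem hnoN hCAfin]
  refine ⟨by rw [hcard1, hcard2], ?_⟩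
  -- multiloops
  set MA : Set (Set ℕ) := {S ∈ CA | 3 ≤ S.ncard} with hMA
  have hMAfin : MA.Finite := hCAfin.subset (fun S hS => hS.1)
  have hMAimg : {S ∈ (Set.image (fun b : ℕ => b + 1)) '' CA | 3 ≤ S.ncard}
      = (Set.image (fun b => b + 1)) '' MA := by
    ext SS
    simp only [Set.mem_setOf_eq, Set.mem_image]
    constructor
    · rintro ⟨⟨S₀, hS₀, rfl⟩, hc⟩
      rw [Set.ncard_image_of_injective _ succ_inj'] at hc
      exact ⟨S₀, ⟨hS₀, hc⟩, rfl⟩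
    · rintro ⟨S₀, ⟨hS₀, hc⟩, rfl⟩
      exact ⟨⟨S₀, hS₀, rfl⟩, by rwa [Set.ncard_image_of_injective _ succ_inj']⟩
  have hc3 : ({0, m, N} : Set ℕ).ncard = 3 := by
    rw [Set.ncard_insert_of_notMem (by simp; omega) (Set.toFinite _),
      Set.ncard_pair (by omega)]
  have hMg : {S : Set ℕ | (∃ x, x < N + 2 ∧ S = orbitOf g x) ∧ 3 ≤ S.ncard}
      = insert {0, m, N} ((Set.image (fun b => b + 1)) '' MA) := by
    have : {S : Set ℕ | (∃ x, x < N + 2 ∧ S = orbitOf g x) ∧ 3 ≤ S.ncard}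
        = {S ∈ {S : Set ℕ | ∃ x, x < N + 2 ∧ S = orbitOf g x} | 3 ≤ S.ncard} := rfl
    rw [this, hCg]
    ext SS
    simp only [Set.mem_setOf_eq, Set.mem_insert_iff]
    constructor
    · rintro ⟨(rfl | rfl | hmem), hc⟩
      · rw [Set.ncard_singleton] at hc; omega
      · exact Or.inl rfl
      · exact Or.inr (by rw [← hMAimg]; exact ⟨hmem, hc⟩)
    · rintro (rfl | hmem)
      · exact ⟨Or.inr (Or.inl rfl), by rw [hc3]⟩
      · rw [← hMAimg] at hmem; exact ⟨Or.inr (Or.inr hmem.1), hmem.2⟩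
  have hMd : {S : Set ℕ | (∃ x, x < N ∧ S = orbitOf d x) ∧ 3 ≤ S.ncard} = MA := by
    have : {S : Set ℕ | (∃ x, x < N ∧ S = orbitOf d x) ∧ 3 ≤ S.ncard}
        = {S ∈ {S : Set ℕ | ∃ x, x < N ∧ S = orbitOf d x} | 3 ≤ S.ncard} := rfl
    rw [this, hCd]
    ext SS
    simp only [Set.mem_setOf_eq, Set.mem_insert_iff]
    constructor
    · rintro ⟨(rfl | rfl | hmem), hc⟩
      · rw [Set.ncard_singleton] at hc; omega
      · rw [Set.ncard_singleton] at hc; omega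
      · exact ⟨hmem, hc⟩
    · rintro ⟨hmem, hc⟩; exact ⟨Or.inr (Or.inr hmem), hc⟩
  have hno3' : ({0, m, N} : Set ℕ) ∉ (Set.image (fun b : ℕ => b + 1)) '' MA := by
    intro h
    exact hno3 (Set.image_mono (fun S hS => hS.1) h)
  rw [numMultiOn, numMultiOn, hMg, hMd,
    Set.ncard_insert_of_notMem hno3' (hMAfin.image _),
    Set.ncard_image_of_injective _ himginj]

end CycCount
section CombineCyc

lemma combine_cyc {s t c : ℕ → ℕ} {m NT : ℕ} (hm : 1 ≤ m) (hNT : 1 ≤ NT)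
    (hs : ∀ a, a < m → c a = s a ∧ s a < m)
    (ht : ∀ a, a < NT → c (a + m) = t a + m ∧ t a < NT) :
    numCyclesOn c (m + NT) = numCyclesOn s m + numCyclesOn t NT := by
  have hsinv : ∀ a ∈ Set.Iio m, s a ∈ Set.Iio m := fun a ha => (hs a ha).2
  have htinv : ∀ a ∈ Set.Iio NT, t a ∈ Set.Iio NT := fun a ha => (ht a ha).2
  have horbs : ∀ a ∈ Set.Iio m, orbitOf c a = orbitOf s a := by
    intro a ha
    have := orbit_conj (e := id) hsinv (fun b hb => (hs b hb).1) ha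
    simpa using this
  have horbt : ∀ a ∈ Set.Iio NT, orbitOf c (a + m) = (fun b => b + m) '' orbitOf t a := by
    intro a ha
    exact orbit_conj (e := fun b => b + m) htinv (fun b hb => (ht b hb).1) ha
  have hsubs : ∀ a ∈ Set.Iio m, orbitOf s a ⊆ Set.Iio m := fun a ha => orbit_subset hsinv ha
  have hsubt : ∀ a ∈ Set.Iio NT, orbitOf t a ⊆ Set.Iio NT := fun a ha => orbit_subset htinv ha
  have haddinj : Function.Injective (fun b : ℕ => b + m) := fun a b h => by simpa using h
  have hCc : {S : Set ℕ | ∃ x, x < m + NT ∧ S = orbitOf c x}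
      = {S : Set ℕ | ∃ x, x < m ∧ S = orbitOf s x}
        ∪ (Set.image (fun b => b + m)) '' {S : Set ℕ | ∃ x, x < NT ∧ S = orbitOf t x} := by
    ext SS
    simp only [Set.mem_setOf_eq, Set.mem_union, Set.mem_image]
    constructor
    · rintro ⟨x, hx, rfl⟩
      by_cases hxm : x < m
      · exact Or.inl ⟨x, hxm, horbs x hxm⟩
      · obtain ⟨a, rfl⟩ : ∃ a, x = a + m := ⟨x - m, by omega⟩
        have ha : a < NT := by omega
        exact Or.inr ⟨orbitOf t a, ⟨a, ha, rfl⟩, (horbt a ha).symm⟩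
    · rintro (⟨x, hx, rfl⟩ | ⟨S₀, ⟨a, ha, rfl⟩, rfl⟩)
      · exact ⟨x, by omega, (horbs x hx).symm⟩
      · exact ⟨a + m, by omega, (horbt a ha).symm⟩
  have hdisj : Disjoint {S : Set ℕ | ∃ x, x < m ∧ S = orbitOf s x}
      ((Set.image (fun b => b + m)) '' {S : Set ℕ | ∃ x, x < NT ∧ S = orbitOf t x}) := by
    rw [Set.disjoint_left]
    rintro SS ⟨x, hx, rfl⟩ ⟨S₀, ⟨a, ha, rfl⟩, hEq⟩
    have hmem : a + m ∈ (Set.image (fun b => b + m)) (orbitOf t a) :=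
      ⟨a, mem_orbit_self t a, rfl⟩
    rw [hEq] at hmem
    have := hsubs x hx hmem
    simp only [Set.mem_Iio] at this
    omega
  rw [numCyclesOn, numCyclesOn, numCyclesOn, hCc,
    Set.ncard_union_eq hdisj (cycSet_finite s m) ((cycSet_finite t NT).image _),
    Set.ncard_image_of_injective _ (Set.image_injective.mpr haddinj)]

end CombineCyc
section GlueMain

lemma glue_main (D : TwoD) (hWF : D.WF) (hSh : D.IsShape)
    (hm3 : 3 ≤ D.m) (hmN3 : D.m + 3 ≤ 2 * D.n) :
    (glue D).WF ∧ (glue D).IsShape ∧ (glue D).IsA ∧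
      (glue D).r = D.r ∧ (glue D).nMulti = D.nMulti + 1 ∧ (glue D).n = D.n + 1 := by
  simp only [TwoD.WF] at hWF
  simp only [TwoD.IsShape] at hSh
  obtain ⟨hm1, hmlt, hfl, hid, hinv, hfix⟩ := hWF
  obtain ⟨hm2, hm2N, hf0, hfm, h1arc, hstk⟩ := hSh
  have hfm1 : D.f (D.m - 1) = 0 := by have := hinv 0; rw [hf0] at this; exact this
  have hfN1 : D.f (2 * D.n - 1) = D.m := by have := hinv D.m; rw [hfm] at this; exact this
  set E := glue D with hE
  have hEn : E.n = D.n + 1 := rfl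
  have h0 : E.f 0 = 2 * D.n + 1 := rfl
  have htop : E.f (2 * D.n + 1) = 0 := by
    show (if 2 * D.n + 1 = 0 then 2 * D.n + 1 else if 2 * D.n + 1 = 2 * D.n + 1 then 0
      else if 2 * D.n + 1 ≤ 2 * D.n then D.f (2 * D.n + 1 - 1) + 1 else 2 * D.n + 1) = 0
    rw [if_neg (by omega), if_pos rfl]
  have hmid : ∀ i, 1 ≤ i → i ≤ 2 * D.n → E.f i = D.f (i - 1) + 1 := by
    intro i hi1 hi2
    show (if i = 0 then 2 * D.n + 1 else if i = 2 * D.n + 1 then 0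
      else if i ≤ 2 * D.n then D.f (i - 1) + 1 else i) = D.f (i - 1) + 1
    rw [if_neg (by omega), if_neg (by omega), if_pos hi2]
  have hbig : ∀ i, 2 * D.n + 2 ≤ i → E.f i = i := by
    intro i hi
    show (if i = 0 then 2 * D.n + 1 else if i = 2 * D.n + 1 then 0
      else if i ≤ 2 * D.n then D.f (i - 1) + 1 else i) = i
    rw [if_neg (by omega), if_neg (by omega), if_neg (by omega)]
  -- WF
  have hWF' : E.WF := by
    refine ⟨by omega, ?_, ?_, ?_, ?_, ?_⟩
    · intro i hi
      rw [hEn] at hi ⊢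
      rcases Nat.lt_or_ge i 1 with h | h
      · have : i = 0 := by omega
        rw [this, h0]; omega
      rcases Nat.lt_or_ge (2 * D.n) i with h' | h'
      · have : i = 2 * D.n + 1 := by omega
        rw [this, htop]; omega
      · rw [hmid i h h']
        have := hfl (i - 1) (by omega); omega
    · intro i hi
      rw [hEn] at hi
      exact hbig i (by omega)
    · intro i
      rcases Nat.lt_or_ge i 1 with h | h
      · have hi0 : i = 0 := by omega
        rw [hi0, h0, htop]
      rcases Nat.lt_or_ge (2 * D.n) i with h' | h'
      · rcases Nat.lt_or_ge (2 * D.n + 1) i with h'' | h''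
        · rw [hbig i (by omega), hbig i (by omega)]
        · have hi1 : i = 2 * D.n + 1 := by omega
          rw [hi1, htop, h0]
      · rw [hmid i h h']
        have hv : D.f (i - 1) < 2 * D.n := hfl _ (by omega)
        rw [hmid _ (by omega) (by omega)]
        simp only [Nat.add_sub_cancel]
        rw [hinv]; omega
    · intro i hi
      rw [hEn] at hi
      rcases Nat.lt_or_ge i 1 with h | h
      · have hi0 : i = 0 := by omega
        rw [hi0, h0]; omega
      rcases Nat.lt_or_ge (2 * D.n) i with h' | h'
      · have hi1 : i = 2 * D.n + 1 := by omega
        rw [hi1, htop]; omega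
      · rw [hmid i h h']
        have := hfix (i - 1) (by omega); omega
    · rw [h0, hEn]; omega
  -- IsShape
  have hSh' : E.IsShape := by
    constructor
    · intro i harc
      obtain ⟨hilt, hfi⟩ := harc
      rw [hEn] at hilt
      exfalso
      rcases Nat.lt_or_ge i 1 with h | h
      · have hi0 : i = 0 := by omega
        rw [hi0, h0] at hfi; omega
      rcases Nat.lt_or_ge (2 * D.n) i with h' | h'
      · have hi1 : i = 2 * D.n + 1 := by omega
        rw [hi1, htop] at hfi; omega
      rw [hmid i h h'] at hfi
      have harc' : D.f (i - 1) = i := by omega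
      by_cases him : i = D.m
      · rw [him] at harc'; rw [hfm1] at harc'; omega
      · have hres := h1arc (i - 1) ⟨by omega, by rw [harc']; omega⟩
          (by simp only [TwoD.sameBB]; omega)
        rcases hres with ⟨ha, hb⟩ | ⟨ha, hb⟩ <;> omega
    · intro i j harc1 harc2 hlt
      obtain ⟨hilt, hfi⟩ := harc1
      obtain ⟨hi1lt, hfi1⟩ := harc2
      rw [hEn] at hilt hi1lt
      rcases Nat.lt_or_ge i 1 with h | h
      · have hi0 : i = 0 := by omega
        rw [hi0, h0] at hfi
        rw [hi0] at hfi1 hlt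
        rw [hmid 1 (by omega) (by omega)] at hfi1
        simp only [Nat.sub_self] at hfi1
        rw [hf0] at hfi1
        omega
      rcases Nat.lt_or_ge (2 * D.n) i with h' | h'
      · have hi1 : i = 2 * D.n + 1 := by omega
        rw [hi1, htop] at hfi
        omega
      rw [hmid i h h'] at hfi
      have hjle : D.f (i - 1) < 2 * D.n := hfl _ (by omega)
      rcases Nat.lt_or_ge (2 * D.n) (i + 1) with h'' | h''
      · have hi1 : i + 1 = 2 * D.n + 1 := by omega
        rw [hi1, htop] at hfi1
        omega
      rw [hmid (i + 1) (by omega) h''] at hfi1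
      simp only [Nat.add_sub_cancel] at hfi1
      -- now D.f (i-1) + 1 = j, D.f i + 1 = j - 1, i + 1 < j - 1
      by_cases him : i = D.m
      · rw [him] at hfi; rw [hfm1] at hfi; omega
      by_cases hjm : j - 1 = D.m
      · have hffi : D.f (i - 1) = D.m := by omega
        have h2 := hinv (i - 1)
        rw [hffi, hfm] at h2
        omega
      have harcA : D.arc (i - 1) (j - 1) := ⟨by omega, by omega⟩
      have harcB : D.arc (i - 1 + 1) (j - 1 - 1) := by
        have e1 : i - 1 + 1 = i := by omega
        have e2 : j - 1 - 1 = j - 2 := by omega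
        exact ⟨by omega, by rw [e1, e2]; omega⟩
      have hres := hstk (i - 1) (j - 1) harcA harcB
        (by simp only [TwoD.sameBB]; omega)
        (by simp only [TwoD.sameBB]; omega)
      exact hres (by omega)
  -- IsA
  have hIsA : E.IsA := by
    refine ⟨by rw [hEn]; omega, ?_⟩
    have h1 : E.f 1 = D.m := by
      rw [hmid 1 (by omega) (by omega)]
      simp only [Nat.sub_self]
      rw [hf0]; omega
    rw [h1, hmid (D.m + 1) (by omega) (by omega)]
    simp only [Nat.add_sub_cancel]
    rw [hfm, hEn]; omega
  -- boundary permutation facts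
  have hdbd : ∀ a, D.bd a = D.f (gammaTwo D.m (2 * D.n) a) := fun a => rfl
  have hd_eval : ∀ a, a < 2 * D.n → a ≠ D.m - 1 → a ≠ 2 * D.n - 1 →
      D.bd a = D.f (a + 1) := by
    intro a h1 h2 h3
    rw [hdbd]; simp only [gammaTwo]
    rw [if_neg (by omega), if_neg (by omega), if_pos (by omega)]
  have hdm : D.bd (D.m - 1) = D.m - 1 := by
    rw [hdbd]; simp only [gammaTwo]
    rw [if_pos (by omega)]; exact hf0
  have hdN : D.bd (2 * D.n - 1) = 2 * D.n - 1 := by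
    rw [hdbd]; simp only [gammaTwo]
    rw [if_neg (by omega), if_pos (by omega)]; exact hfm
  have hEbd : ∀ x, E.bd x = E.f (gammaOne (2 * D.n + 2) x) := by
    intro x
    have h2 : 2 * E.n = 2 * D.n + 2 := by rw [hEn]; ring
    rw [OneD.bd, h2]; rfl
  have hdA : ∀ a, a < 2 * D.n → a ≠ D.m - 1 → a ≠ 2 * D.n - 1 →
      D.bd a < 2 * D.n ∧ D.bd a ≠ D.m - 1 ∧ D.bd a ≠ 2 * D.n - 1 := by
    intro a h1 h2 h3
    rw [hd_eval a h1 h2 h3]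
    refine ⟨hfl _ (by omega), ?_, ?_⟩
    · intro h
      have h4 := hinv (a + 1)
      rw [h, hfm1] at h4; omega
    · intro h
      have h4 := hinv (a + 1)
      rw [h, hfN1] at h4; omega
  have hge : ∀ a, a < 2 * D.n → a ≠ D.m - 1 → a ≠ 2 * D.n - 1 →
      E.bd (a + 1) = D.bd a + 1 := by
    intro a h1 h2 h3
    rw [hEbd]; simp only [gammaOne]
    rw [if_neg (by omega), if_pos (by omega)]
    rw [hmid (a + 1 + 1) (by omega) (by omega)]
    simp only [Nat.add_sub_cancel]
    rw [hd_eval a h1 h2 h3]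
  have hg0 : E.bd 0 = D.m := by
    rw [hEbd]; simp only [gammaOne]
    rw [if_neg (by omega), if_pos (by omega)]
    rw [hmid 1 (by omega) (by omega)]
    simp only [Nat.sub_self]
    rw [hf0]; omega
  have hgm : E.bd D.m = 2 * D.n := by
    rw [hEbd]; simp only [gammaOne]
    rw [if_neg (by omega), if_pos (by omega)]
    rw [hmid (D.m + 1) (by omega) (by omega)]
    simp only [Nat.add_sub_cancel]
    rw [hfm]; omega
  have hgN : E.bd (2 * D.n) = 0 := by
    rw [hEbd]; simp only [gammaOne]
    rw [if_neg (by omega), if_pos (by omega)]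
    exact htop
  have hgt : E.bd (2 * D.n + 1) = 2 * D.n + 1 := by
    rw [hEbd]; simp only [gammaOne]
    rw [if_pos trivial]
    exact h0
  have hcyc := glue_cyc (d := D.bd) (g := E.bd) (m := D.m) (N := 2 * D.n)
    (by omega) (by omega) hdm hdN hdA hge hg0 hgm hgN hgt
  have h2E : 2 * E.n = 2 * D.n + 2 := by rw [hEn]; ring
  refine ⟨hWF', hSh', hIsA, ?_, ?_, hEn⟩
  · rw [OneD.r, TwoD.r, h2E]
    exact hcyc.1
  · rw [OneD.nMulti, TwoD.nMulti, h2E]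
    exact hcyc.2

end GlueMain
section CombineMain

lemma shape_n_ge_two (S : OneD) (hWF : S.WF) {g₁ : ℕ} (hg : S.HasGenus g₁)
    (h1 : 1 ≤ g₁) : 2 ≤ S.n := by
  have hn1 : 1 ≤ S.n := hWF.1
  have hr : 1 ≤ S.r := numCyclesOn_pos _ (by omega)
  simp only [OneD.HasGenus] at hg
  omega

lemma combine_main (S T : OneD) (hS : S.WF) (hT : T.WF)
    (hSsh : S.IsShape) (hTsh : T.IsShape) :
    (combine S T).WF ∧ (combine S T).IsShape ∧
      (combine S T).r = S.r + T.r := by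
  obtain ⟨hSn, hSfl, hSid, hSinv, hSfix, hSf0⟩ := hS
  obtain ⟨hTn, hTfl, hTid, hTinv, hTfix, hTf0⟩ := hT
  obtain ⟨hS1arc, hSstk⟩ := hSsh
  obtain ⟨hT1arc, hTstk⟩ := hTsh
  set C := combine S T with hC
  have hCn : C.n = S.n + T.n := rfl
  have hCm : C.m = 2 * S.n := rfl
  have hflo : ∀ i, i < 2 * S.n → C.f i = S.f i := by
    intro i hi
    show (if i < 2 * S.n then S.f i else if i < 2 * (S.n + T.n) then T.f (i - 2 * S.n) + 2 * S.n
      else i) = S.f i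
    rw [if_pos hi]
  have hfhi : ∀ i, 2 * S.n ≤ i → i < 2 * (S.n + T.n) → C.f i = T.f (i - 2 * S.n) + 2 * S.n := by
    intro i h1 h2
    show (if i < 2 * S.n then S.f i else if i < 2 * (S.n + T.n) then T.f (i - 2 * S.n) + 2 * S.n
      else i) = T.f (i - 2 * S.n) + 2 * S.n
    rw [if_neg (by omega), if_pos h2]
  have hfbig : ∀ i, 2 * (S.n + T.n) ≤ i → C.f i = i := by
    intro i h1
    show (if i < 2 * S.n then S.f i else if i < 2 * (S.n + T.n) then T.f (i - 2 * S.n) + 2 * S.n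
      else i) = i
    rw [if_neg (by omega), if_neg (by omega)]
  have hWF' : C.WF := by
    refine ⟨by rw [hCm]; omega, by rw [hCm, hCn]; omega, ?_, ?_, ?_, ?_⟩
    · intro i hi
      rw [hCn] at hi ⊢
      rcases Nat.lt_or_ge i (2 * S.n) with h | h
      · rw [hflo i h]; have := hSfl i h; omega
      · rw [hfhi i h hi]; have := hTfl (i - 2 * S.n) (by omega); omega
    · intro i hi
      rw [hCn] at hi
      exact hfbig i hi
    · intro i
      rcases Nat.lt_or_ge i (2 * S.n) with h | h
      · rw [hflo i h]
        have hv := hSfl i h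
        rw [hflo _ hv, hSinv]
      rcases Nat.lt_or_ge i (2 * (S.n + T.n)) with h' | h'
      · rw [hfhi i h h']
        have hv := hTfl (i - 2 * S.n) (by omega)
        rw [hfhi _ (by omega) (by omega)]
        simp only [Nat.add_sub_cancel]
        rw [hTinv]
        omega
      · rw [hfbig i h', hfbig i h']
    · intro i hi
      rw [hCn] at hi
      rcases Nat.lt_or_ge i (2 * S.n) with h | h
      · rw [hflo i h]; exact hSfix i h
      · rw [hfhi i h hi]
        have := hTfix (i - 2 * S.n) (by omega)
        omega
  have hSh' : C.IsShape := by
    refine ⟨by rw [hCm]; omega, by rw [hCm, hCn]; omega, ?_, ?_, ?_, ?_⟩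
    · rw [hflo 0 (by omega), hSf0, hCm]
    · rw [hCm, hCn, hfhi (2 * S.n) (by omega) (by omega)]
      simp only [Nat.sub_self]
      rw [hTf0]
      omega
    · intro i harc hsame
      obtain ⟨hilt, hfi⟩ := harc
      rw [hCn] at hilt
      simp only [TwoD.sameBB] at hsame
      rw [hCm] at hsame
      rw [hCm]
      rcases hsame with ⟨h1, h2⟩ | ⟨h1, h2⟩
      · rw [hflo i h1] at hfi
        have hres := hS1arc i ⟨by omega, hfi⟩
        omega
      · rw [hfhi i h1 (by omega)] at hfi
        have hres := hT1arc (i - 2 * S.n) ⟨by omega, by omega⟩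
        rw [hCn]
        omega
    · intro i j harc1 harc2 hsame1 hsame2 hlt
      obtain ⟨hilt, hfi⟩ := harc1
      obtain ⟨hi1lt, hfi1⟩ := harc2
      rw [hCn] at hilt hi1lt
      simp only [TwoD.sameBB] at hsame1 hsame2
      rw [hCm] at hsame1 hsame2
      rcases hsame1 with ⟨h1, h2⟩ | ⟨h1, h2⟩
      · rw [hflo i h1] at hfi
        have hjlt := hSfl i h1
        rw [hfi] at hjlt
        rw [hflo (i + 1) h2] at hfi1
        exact hSstk i j ⟨h1, hfi⟩ ⟨h2, hfi1⟩ hlt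
      · rw [hfhi i h1 (by omega)] at hfi
        have hjlt := hTfl (i - 2 * S.n) (by omega)
        have hjge : 2 * S.n + 1 ≤ j := by
          rcases hsame2 with ⟨h3, h4⟩ | ⟨h3, h4⟩ <;> omega
        rw [hfhi (i + 1) (by omega) (by omega)] at hfi1
        have e1 : i + 1 - 2 * S.n = i - 2 * S.n + 1 := by omega
        rw [e1] at hfi1
        have ha1 : i - 2 * S.n < 2 * T.n := by omega
        have ha2 : T.f (i - 2 * S.n) = j - 2 * S.n := by omega
        have ha3 : i - 2 * S.n + 1 < 2 * T.n := by omega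
        have ha4 : T.f (i - 2 * S.n + 1) = j - 2 * S.n - 1 := by omega
        have ha5 : i - 2 * S.n + 1 < j - 2 * S.n - 1 := by omega
        exact hTstk _ _ ⟨ha1, ha2⟩ ⟨ha3, ha4⟩ ha5
  -- boundary
  have hCbd : ∀ a, C.bd a = C.f (gammaTwo (2 * S.n) (2 * (S.n + T.n)) a) := fun a => rfl
  have hSbd : ∀ a, S.bd a = S.f (gammaOne (2 * S.n) a) := fun a => rfl
  have hTbd : ∀ a, T.bd a = T.f (gammaOne (2 * T.n) a) := fun a => rfl
  have hs : ∀ a, a < 2 * S.n → C.bd a = S.bd a ∧ S.bd a < 2 * S.n := by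
    intro a ha
    have hkey : C.bd a = S.bd a ∧ gammaOne (2 * S.n) a < 2 * S.n := by
      rw [hCbd, hSbd]
      by_cases h1 : a + 1 = 2 * S.n
      · simp only [gammaTwo, gammaOne]
        rw [if_pos h1, if_pos h1]
        exact ⟨hflo 0 (by omega), by omega⟩
      · simp only [gammaTwo, gammaOne]
        rw [if_neg h1, if_neg (by omega), if_pos (by omega), if_neg h1, if_pos ha]
        exact ⟨hflo (a + 1) (by omega), by omega⟩
    exact ⟨hkey.1, by rw [hSbd]; exact hSfl _ hkey.2⟩
  have ht : ∀ a, a < 2 * T.n → C.bd (a + 2 * S.n) = T.bd a + 2 * S.n ∧ T.bd a < 2 * T.n := by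
    intro a ha
    have hbdlt : T.bd a < 2 * T.n := by
      rw [hTbd]
      refine hTfl _ ?_
      simp only [gammaOne]
      split_ifs <;> omega
    refine ⟨?_, hbdlt⟩
    rw [hCbd, hTbd]
    by_cases h1 : a + 1 = 2 * T.n
    · simp only [gammaTwo, gammaOne]
      rw [if_neg (by omega), if_pos (by omega), if_pos h1]
      rw [hfhi (2 * S.n) (by omega) (by omega)]
      simp only [Nat.sub_self]
    · simp only [gammaTwo, gammaOne]
      rw [if_neg (by omega), if_neg (by omega), if_pos (by omega), if_neg h1, if_pos ha]
      rw [hfhi (a + 2 * S.n + 1) (by omega) (by omega)]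
      have e1 : a + 2 * S.n + 1 - 2 * S.n = a + 1 := by omega
      rw [e1]
  have hcyc := combine_cyc (c := C.bd) (s := S.bd) (t := T.bd)
    (m := 2 * S.n) (NT := 2 * T.n) (by omega) (by omega) hs ht
  refine ⟨hWF', hSh', ?_⟩
  rw [TwoD.r, OneD.r, OneD.r, hCn]
  have e2 : 2 * (S.n + T.n) = 2 * S.n + 2 * T.n := by ring
  rw [e2]
  exact hcyc

end CombineMain
/-- If `x ∈ 𝒬'_g(n+2)` has exactly `ℓ` multiloops (boundary
components of length at least 3), then `η(x) ∈ 𝒜_{g+1}(n+3)` has exactly `ℓ+1`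
multiloops. -/
theorem eta_multiloops (g n ℓ : ℕ) (x : TwoD ⊕ OneD × OneD)
    (hx : x ∈ QprimeSetN g (n + 2)) (hℓ : (underlyingTwoD x).nMulti = ℓ) :
    etaMap x ∈ ASetN (g + 1) (n + 3) ∧ (etaMap x).nMulti = ℓ + 1 := by
  rcases x with D | ⟨S, T⟩
  · simp only [QprimeSetN, Set.mem_setOf_eq, Sum.elim_inl] at hx
    obtain ⟨hWF, hSh, hConn, hGen, hn⟩ := hx
    simp only [underlyingTwoD, Sum.elim_inl, id_eq] at hℓ
    simp only [etaMap, Sum.elim_inl]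
    have hinv : ∀ i, D.f (D.f i) = i := hWF.2.2.2.2.1
    have hfl : ∀ i, i < 2 * D.n → D.f i < 2 * D.n := hWF.2.2.1
    have hm2 : 2 ≤ D.m := hSh.1
    have hm2N : D.m + 2 ≤ 2 * D.n := hSh.2.1
    have hf0 : D.f 0 = D.m - 1 := hSh.2.2.1
    have hfm : D.f D.m = 2 * D.n - 1 := hSh.2.2.2.1
    obtain ⟨i, j, ⟨hilt, hfij⟩, hiM, hjM⟩ := hConn
    have hm3 : 3 ≤ D.m := by
      by_contra h
      have hDm : D.m = 2 := by omega
      have hf0' : D.f 0 = 1 := by rw [hf0, hDm]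
      have hf1 : D.f 1 = 0 := by have := hinv 0; rw [hf0'] at this; exact this
      have hi01 : i = 0 ∨ i = 1 := by omega
      rcases hi01 with rfl | rfl
      · rw [hf0'] at hfij; omega
      · rw [hf1] at hfij; omega
    have hmN3 : D.m + 3 ≤ 2 * D.n := by
      by_contra h
      have hfm' : D.f (2 * D.n - 1) = D.m := by
        have := hinv D.m; rw [hfm] at this; exact this
      have hjlt : j < 2 * D.n := by rw [← hfij]; exact hfl i hilt
      have hij : D.f j = i := by have := hinv i; rw [hfij] at this; exact this
      have hj12 : j = D.m ∨ j = 2 * D.n - 1 := by omega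
      rcases hj12 with rfl | hj2
      · rw [hfm] at hij; omega
      · rw [hj2, hfm'] at hij; omega
    obtain ⟨hWF', hSh', hIsA, hr, hmulti, hEn⟩ := glue_main D hWF hSh hm3 hmN3
    simp only [TwoD.HasGenus] at hGen
    refine ⟨⟨⟨⟨hWF', hSh', ?_⟩, ?_⟩, hIsA⟩, ?_⟩
    · simp only [OneD.HasGenus]; omega
    · omega
    · rw [hmulti, hℓ]
  · simp only [QprimeSetN, Set.mem_setOf_eq, Sum.elim_inr] at hx
    obtain ⟨hSWF, hSsh, hTWF, hTsh, ⟨g₁, g₂, hg1, hg2, hsum, hSg, hTg⟩, hn⟩ := hx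
    simp only [underlyingTwoD, Sum.elim_inr] at hℓ
    simp only [etaMap, Sum.elim_inr]
    have hSn2 := shape_n_ge_two S hSWF hSg hg1
    have hTn2 := shape_n_ge_two T hTWF hTg hg2
    obtain ⟨hCWF, hCsh, hCr⟩ := combine_main S T hSWF hTWF hSsh hTsh
    have hCm : (combine S T).m = 2 * S.n := rfl
    have hCn : (combine S T).n = S.n + T.n := rfl
    obtain ⟨hWF', hSh', hIsA, hr, hmulti, hEn⟩ :=
      glue_main (combine S T) hCWF hCsh (by rw [hCm]; omega) (by rw [hCm, hCn]; omega)
    simp only [OneD.HasGenus] at hSg hTg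
    refine ⟨⟨⟨⟨hWF', hSh', ?_⟩, ?_⟩, hIsA⟩, ?_⟩
    · simp only [OneD.HasGenus]; omega
    · omega
    · rw [hmulti, hℓ]

end RNA
end

section
/- For every fixed g ≥ 0, the set of all connected 2-backbone shapes of genus g (over all n) is finite. -/
namespace RNA

section Aux

open Finset

lemma RNAaux_iter_mem (b : ℕ → ℕ) (k : ℕ) (hm : ∀ x, x < k → b x < k) :
    ∀ j x, x < k → b^[j] x < k := by
  intro j
  induction j with
  | zero => intro x hx; simpa using hx
  | succ j ih =>
      intro x hx
      rw [Function.iterate_succ_apply]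
      exact ih _ (hm x hx)

lemma RNAaux_exists_period (b : ℕ → ℕ) (k : ℕ) (hinj : Function.Injective b)
    (hm : ∀ x, x < k → b x < k) {x : ℕ} (hx : x < k) :
    ∃ p, 0 < p ∧ b^[p] x = x := by
  have hmap : ∀ j ∈ Finset.range (k+1), b^[j] x ∈ Finset.range k := by
    intro j _
    simpa using RNAaux_iter_mem b k hm j x hx
  obtain ⟨a, _, c, _, hne, heq⟩ :=
    Finset.exists_ne_map_eq_of_card_lt_of_maps_to (by simp) hmap
  have key : ∀ a c : ℕ, a < c → b^[a] x = b^[c] x → ∃ p, 0 < p ∧ b^[p] x = x := by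
    intro a c hac h
    refine ⟨c - a, by omega, ?_⟩
    have h2 : b^[a] (b^[c-a] x) = b^[a] x := by
      rw [← Function.iterate_add_apply]
      rw [show a + (c - a) = c by omega]
      exact h.symm
    exact (hinj.iterate a) h2
  rcases Nat.lt_or_ge a c with h' | h'
  · exact key a c h' heq
  · exact key c a (by omega) heq.symm

lemma RNAaux_iterate_mul_fix (b : ℕ → ℕ) {p x : ℕ} (hpx : b^[p] x = x) :
    ∀ s, b^[p * s] x = x := by
  intro s
  induction s with
  | zero => simp
  | succ s ih =>
      rw [Nat.mul_succ, Function.iterate_add_apply, hpx, ih]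

lemma RNAaux_orbit_eq (b : ℕ → ℕ) (k : ℕ) (hinj : Function.Injective b)
    (hm : ∀ x, x < k → b x < k) {x y : ℕ} (hx : x < k) (hy : y ∈ RNA.orbitOf b x) :
    RNA.orbitOf b y = RNA.orbitOf b x := by
  obtain ⟨j, rfl⟩ := hy
  ext z
  constructor
  · rintro ⟨t, rfl⟩
    exact ⟨t + j, by rw [Function.iterate_add_apply]⟩
  · rintro ⟨i, rfl⟩
    obtain ⟨p, hp, hpx⟩ := RNAaux_exists_period b k hinj hm hx
    refine ⟨i + p * (j+1) - j, ?_⟩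
    rw [← Function.iterate_add_apply]
    have hle : j + 1 ≤ p * (j + 1) := Nat.le_mul_of_pos_left _ hp
    rw [show i + p * (j+1) - j + j = i + p * (j+1) by omega]
    rw [Function.iterate_add_apply, RNAaux_iterate_mul_fix b hpx]

open Classical in
noncomputable def RNAaux_ofin (b : ℕ → ℕ) (k x : ℕ) : Finset ℕ :=
  (Finset.range k).filter (fun z => z ∈ RNA.orbitOf b x)

open Classical in
lemma RNAaux_mem_ofin (b : ℕ → ℕ) (k x z : ℕ) :
    z ∈ RNAaux_ofin b k x ↔ z < k ∧ z ∈ RNA.orbitOf b x := by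
  simp [RNAaux_ofin]

lemma RNAaux_ofin_coe (b : ℕ → ℕ) (k : ℕ) (hm : ∀ x, x < k → b x < k) {x : ℕ}
    (hx : x < k) : (RNAaux_ofin b k x : Set ℕ) = RNA.orbitOf b x := by
  ext z
  simp only [Finset.mem_coe, RNAaux_mem_ofin]
  constructor
  · rintro ⟨_, h⟩; exact h
  · rintro ⟨j, rfl⟩; exact ⟨RNAaux_iter_mem b k hm j x hx, ⟨j, rfl⟩⟩

lemma RNAaux_cycle_count_bound (b : ℕ → ℕ) (k c0 c1 c2 c3 : ℕ)
    (hinj : Function.Injective b) (hm : ∀ x, x < k → b x < k)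
    (hfix : ∀ x, x < k → b x = x → x = c0 ∨ x = c1 ∨ x = c2 ∨ x = c3)
    (hno2 : ∀ x y, x < k → y < k → x ≠ y → b x = y → b y = x → False) :
    3 * RNA.numCyclesOn b k ≤ k + 12 := by
  classical
  set O : Finset (Finset ℕ) := (Finset.range k).image (RNAaux_ofin b k) with hO
  have hr : RNA.numCyclesOn b k = O.card := by
    have hset : {S : Set ℕ | ∃ x, x < k ∧ S = RNA.orbitOf b x}
        = (fun t : Finset ℕ => (t : Set ℕ)) '' ↑O := by
      ext S
      simp only [Set.mem_setOf_eq, Set.mem_image, Finset.mem_coe, hO, Finset.mem_image,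
        Finset.mem_range]
      constructor
      · rintro ⟨x, hx, rfl⟩
        exact ⟨RNAaux_ofin b k x, ⟨x, hx, rfl⟩, RNAaux_ofin_coe b k hm hx⟩
      · rintro ⟨t, ⟨x, hx, rfl⟩, rfl⟩
        exact ⟨x, hx, RNAaux_ofin_coe b k hm hx⟩
    rw [RNA.numCyclesOn, hset, Set.ncard_image_of_injective _ Finset.coe_injective,
      Set.ncard_coe_finset]
  -- pairwise disjointness
  have hdisj : ∀ S ∈ O, ∀ T ∈ O, S ≠ T → Disjoint S T := by
    intro S hS T hT hne
    simp only [hO, Finset.mem_image, Finset.mem_range] at hS hT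
    obtain ⟨x, hx, rfl⟩ := hS
    obtain ⟨y, hy, rfl⟩ := hT
    rw [Finset.disjoint_left]
    intro z hzx hzy
    rw [RNAaux_mem_ofin] at hzx hzy
    have horb : RNA.orbitOf b x = RNA.orbitOf b y := by
      rw [← RNAaux_orbit_eq b k hinj hm hx hzx.2, RNAaux_orbit_eq b k hinj hm hy hzy.2]
    apply hne
    ext w
    simp only [RNAaux_mem_ofin, horb]
  have hun : O.biUnion id = Finset.range k := by
    apply Finset.Subset.antisymm
    · intro z hz
      simp only [Finset.mem_biUnion, id] at hz
      obtain ⟨S, hS, hzS⟩ := hz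
      simp only [hO, Finset.mem_image, Finset.mem_range] at hS
      obtain ⟨x, hx, rfl⟩ := hS
      rw [RNAaux_mem_ofin] at hzS
      simpa using hzS.1
    · intro z hz
      simp only [Finset.mem_range] at hz
      simp only [Finset.mem_biUnion, id]
      refine ⟨RNAaux_ofin b k z, ?_, ?_⟩
      · simp only [hO, Finset.mem_image, Finset.mem_range]
        exact ⟨z, hz, rfl⟩
      · rw [RNAaux_mem_ofin]
        exact ⟨hz, ⟨0, rfl⟩⟩
  have hsum : ∑ S ∈ O, S.card = k := by
    have h1 := Finset.card_biUnion (s := O) (t := id) hdisj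
    rw [hun, Finset.card_range] at h1
    simpa using h1.symm
  -- small orbits are singletons of fixed points
  have hsmall : ∀ S ∈ O, S.card ≤ 2 → S = {c0} ∨ S = {c1} ∨ S = {c2} ∨ S = {c3} := by
    intro S hS hcard
    simp only [hO, Finset.mem_image, Finset.mem_range] at hS
    obtain ⟨x, hx, rfl⟩ := hS
    have hbx : b x = x := by
      by_contra hbx
      have hy : b x < k := hm x hx
      have hz : b (b x) < k := hm _ hy
      have hzy : b (b x) ≠ b x := fun h => hbx (hinj h)
      have hzx : b (b x) ≠ x := by
        intro h
        exact hno2 x (b x) hx hy (fun h' => hbx h'.symm) rfl h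
      have hsub : ({x, b x, b (b x)} : Finset ℕ) ⊆ RNAaux_ofin b k x := by
        intro w hw
        simp only [Finset.mem_insert, Finset.mem_singleton] at hw
        rw [RNAaux_mem_ofin]
        rcases hw with rfl | rfl | rfl
        · exact ⟨hx, ⟨0, rfl⟩⟩
        · exact ⟨hy, ⟨1, rfl⟩⟩
        · exact ⟨hz, ⟨2, rfl⟩⟩
      have h3 : ({x, b x, b (b x)} : Finset ℕ).card = 3 := by
        rw [Finset.card_insert_of_notMem, Finset.card_insert_of_notMem,
          Finset.card_singleton]
        · simp only [Finset.mem_singleton]; exact hzy.symm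
        · simp only [Finset.mem_insert, Finset.mem_singleton]
          push_neg
          exact ⟨fun h => hbx h.symm, fun h => hzx h.symm⟩
      have := Finset.card_le_card hsub
      omega
    have hiter : ∀ j, b^[j] x = x := by
      intro j
      induction j with
      | zero => rfl
      | succ j ih => rw [Function.iterate_succ_apply, hbx, ih]
    have hsx : RNAaux_ofin b k x = {x} := by
      ext w
      simp only [RNAaux_mem_ofin, Finset.mem_singleton]
      constructor
      · rintro ⟨_, j, rfl⟩
        exact hiter j
      · rintro rfl
        exact ⟨hx, ⟨0, rfl⟩⟩
    rcases hfix x hx hbx with rfl | rfl | rfl | rfl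
    · exact Or.inl hsx
    · exact Or.inr (Or.inl hsx)
    · exact Or.inr (Or.inr (Or.inl hsx))
    · exact Or.inr (Or.inr (Or.inr hsx))
  set A := O.filter (fun S => S.card ≤ 2) with hA
  set B := O.filter (fun S => ¬ S.card ≤ 2) with hB
  have hAB : A.card + B.card = O.card := Finset.card_filter_add_card_filter_not _
  have hAle : A.card ≤ 4 := by
    have hsub : A ⊆ ({({c0} : Finset ℕ), {c1}, {c2}, {c3}} : Finset (Finset ℕ)) := by
      intro S hS
      simp only [hA, Finset.mem_filter] at hS
      rcases hsmall S hS.1 hS.2 with h | h | h | h <;>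
        simp [h]
    calc A.card ≤ _ := Finset.card_le_card hsub
      _ ≤ 4 := by
        apply le_trans (Finset.card_insert_le _ _)
        have : (({({c1} : Finset ℕ), {c2}, {c3}}) : Finset (Finset ℕ)).card ≤ 3 := by
          apply le_trans (Finset.card_insert_le _ _)
          have : (({({c2} : Finset ℕ), {c3}}) : Finset (Finset ℕ)).card ≤ 2 := by
            apply le_trans (Finset.card_insert_le _ _)
            simp
          omega
        omega
  have hBsum : 3 * B.card ≤ ∑ S ∈ B, S.card := by
    have : ∀ S ∈ B, 3 ≤ S.card := by
      intro S hS
      simp only [hB, Finset.mem_filter] at hS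
      omega
    calc 3 * B.card = ∑ _S ∈ B, 3 := by rw [Finset.sum_const]; ring
      _ ≤ ∑ S ∈ B, S.card := Finset.sum_le_sum this
  have hsplit : ∑ S ∈ A, S.card + ∑ S ∈ B, S.card = ∑ S ∈ O, S.card :=
    Finset.sum_filter_add_sum_filter_not _ _ _
  omega

end Aux

section Diagram

open RNA

lemma RNAaux_gammaTwo_inj {m k : ℕ} (hm : 1 ≤ m) (hmk : m < k) :
    Function.Injective (gammaTwo m k) := by
  intro a c h
  unfold gammaTwo at h
  split_ifs at h <;> omega

lemma RNAaux_bd_inj (D : TwoD) (hWF : D.WF) : Function.Injective D.bd := by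
  obtain ⟨hm1, hmk, hlt, hge, hinv, hnfix⟩ := hWF
  have hfinj : Function.Injective D.f :=
    Function.LeftInverse.injective (g := D.f) hinv
  exact hfinj.comp (RNAaux_gammaTwo_inj hm1 hmk)

lemma RNAaux_bd_maps (D : TwoD) (hWF : D.WF) :
    ∀ x, x < 2 * D.n → D.bd x < 2 * D.n := by
  obtain ⟨hm1, hmk, hlt, hge, hinv, hnfix⟩ := hWF
  intro x hx
  have hg : gammaTwo D.m (2 * D.n) x < 2 * D.n := by
    unfold gammaTwo
    split_ifs <;> omega
  exact hlt _ hg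

lemma RNAaux_bd_fix (D : TwoD) (hWF : D.WF) (hS : D.IsShape) :
    ∀ x, x < 2 * D.n → D.bd x = x →
      x = 0 ∨ x = D.m - 1 ∨ x = D.m ∨ x = 2 * D.n - 1 := by
  intro x hx h
  obtain ⟨hm1, hmk, hlt, hge, hinv, hnfix⟩ := hWF
  obtain ⟨hm2, hk2, hf0, hfm, h1arc, hstk⟩ := hS
  simp only [TwoD.bd, Function.comp_apply, gammaTwo] at h
  split_ifs at h with h1 h2
  · rw [hf0] at h; omega
  · rw [hfm] at h; omega
  · have harc : D.arc x (x + 1) := ⟨hx, by nth_rewrite 1 [← h]; rw [hinv]⟩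
    have hbb : D.sameBB x (x + 1) := by unfold TwoD.sameBB; omega
    rcases h1arc x harc hbb with h' | h' <;> omega

lemma RNAaux_no2_aux (D : TwoD) (hWF : D.WF) (hS : D.IsShape) {i j : ℕ}
    (hij : i < j) (hi : i + 1 < 2 * D.n) (hj : j + 1 < 2 * D.n)
    (him : i + 1 ≠ D.m) (hjm : j + 1 ≠ D.m)
    (h1 : D.f (i + 1) = j) (h2 : D.f (j + 1) = i) : False := by
  obtain ⟨hm1, hmk, hlt, hge, hinv, hnfix⟩ := hWF
  obtain ⟨hm2, hk2, hf0, hfm, h1arc, hstk⟩ := hS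
  have harc1 : D.arc i (j + 1) := ⟨by omega, by rw [← h2, hinv]⟩
  have harc2 : D.arc (i + 1) ((j + 1) - 1) := ⟨hi, by simpa using h1⟩
  have hbb1 : D.sameBB i (i + 1) := by unfold TwoD.sameBB; omega
  have hbb2 : D.sameBB ((j + 1) - 1) (j + 1) := by unfold TwoD.sameBB; omega
  have hns := hstk i (j + 1) harc1 harc2 hbb1 hbb2
  have hji : j = i + 1 := by omega
  exact hnfix (i + 1) hi (by rw [h1]; omega)

lemma RNAaux_bd_no2 (D : TwoD) (hWF : D.WF) (hS : D.IsShape) :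
    ∀ x y, x < 2 * D.n → y < 2 * D.n → x ≠ y → D.bd x = y → D.bd y = x → False := by
  intro x y hx hy hxy h1 h2
  have hf0 : D.f 0 = D.m - 1 := hS.2.2.1
  have hfm : D.f D.m = 2 * D.n - 1 := hS.2.2.2.1
  have hm1 : 1 ≤ D.m := hWF.1
  have hmk : D.m < 2 * D.n := hWF.2.1
  simp only [TwoD.bd, Function.comp_apply, gammaTwo] at h1 h2
  split_ifs at h1 with a1 a2
  · rw [hf0] at h1; omega
  · rw [hfm] at h1; omega
  · split_ifs at h2 with b1 b2
    · rw [hf0] at h2; omega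
    · rw [hfm] at h2; omega
    · rcases Nat.lt_or_ge x y with hlt | hge
      · exact RNAaux_no2_aux D hWF hS hlt (by omega) (by omega) a1 b1 h1 h2
      · exact RNAaux_no2_aux D hWF hS (by omega) (by omega) (by omega) b1 a1 h2 h1

lemma RNAaux_n_le (D : TwoD) (g : ℕ) (hWF : D.WF) (hS : D.IsShape)
    (hG : D.HasGenus g) : D.n ≤ 6 * g + 12 := by
  have hb := RNAaux_cycle_count_bound D.bd (2 * D.n) 0 (D.m - 1) D.m (2 * D.n - 1)
    (RNAaux_bd_inj D hWF) (RNAaux_bd_maps D hWF)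
    (RNAaux_bd_fix D hWF hS) (RNAaux_bd_no2 D hWF hS)
  unfold TwoD.HasGenus TwoD.r at hG
  omega

end Diagram

/-- For every fixed `g ≥ 0`, the set of all connected 2-backbone
shapes of genus `g` (over all `n`) is finite. -/
theorem twoShapeSet_finite (g : ℕ) :
    {D : TwoD | D.WF ∧ D.IsShape ∧ D.Connected ∧ D.HasGenus g}.Finite := by
  classical
  set K := 2 * (6 * g + 12) + 1 with hK
  set S := {D : TwoD | D.WF ∧ D.IsShape ∧ D.Connected ∧ D.HasGenus g} with hSdef
  have hnK : ∀ D ∈ S, 2 * D.n < K := by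
    intro D hD
    have := RNAaux_n_le D g hD.1 hD.2.1 hD.2.2.2
    omega
  set φ : TwoD → ℕ × ℕ × (Fin K → ℕ) := fun D => (D.n, D.m, fun i => D.f i) with hφ
  apply Set.Finite.of_finite_image (f := φ)
  · apply Set.Finite.subset
      (Set.Finite.prod (Set.finite_Iio K)
        (Set.Finite.prod (Set.finite_Iio K)
          (Set.Finite.pi (fun _ : Fin K => Set.finite_Iio K))))
    rintro _ ⟨D, hD, rfl⟩
    have h2n : 2 * D.n < K := hnK D hD
    have hWF := hD.1
    refine ⟨?_, ?_, ?_⟩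
    · simp only [Set.mem_Iio, hφ]; omega
    · simp only [Set.mem_Iio, hφ]
      have := hWF.2.1
      omega
    · intro i _
      simp only [Set.mem_Iio, hφ]
      rcases Nat.lt_or_ge (i : ℕ) (2 * D.n) with h | h
      · have := hWF.2.2.1 i h; omega
      · rw [hWF.2.2.2.1 i h]
        exact i.2
  · rintro D hD D' hD' heq
    have h2n : 2 * D.n < K := hnK D hD
    have h2n' : 2 * D'.n < K := hnK D' hD'
    have hn : D.n = D'.n := congrArg (fun p => p.1) heq
    have hm : D.m = D'.m := congrArg (fun p => p.2.1) heq
    have hfK : (fun i : Fin K => D.f i) = fun i : Fin K => D'.f i :=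
      congrArg (fun p => p.2.2) heq
    have hext : ∀ A B : TwoD, A.n = B.n → A.m = B.m → A.f = B.f → A = B := by
      rintro ⟨_, _, _⟩ ⟨_, _, _⟩ rfl rfl rfl; rfl
    refine hext D D' hn hm (funext fun i => ?_)
    rcases Nat.lt_or_ge i K with h | h
    · exact congrFun hfK ⟨i, h⟩
    · exact (hD.1.2.2.2.1 i (by omega)).trans (hD'.1.2.2.2.1 i (by omega)).symm

end RNA
end
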